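/- arXiv:2205.02215 — 3 statements merged into one kernel-verified Lean document; each statement's English description precedes it below -/
import Mathlib

section
/- Let g : ℝ^{d1} × ℝ^{d2} → ℝ be such that for every x, the map y ↦ g(x,y) is μ-strongly convex and ∇g is ℓ-Lipschitz on ℝ^{d1} × ℝ^{d2}, with μ > 0. Then the inner minimizer map y*(x) = argmin_y g(x,y) is (ℓ/μ)-Lipschitz: ‖y*(x₁) − y*(x₂)‖ ≤ (ℓ/μ)‖x₁ − x₂‖ for all x₁, x₂. -/
open Set

lemma strong_mono {E : Type*} [NormedAddCommGroup E] [InnerProductSpace ℝ E]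
    {f : E → ℝ} {μ : ℝ}
    (hf : Differentiable ℝ f) (hsc : StrongConvexOn Set.univ μ f) (a b : E) :
    μ * ‖a - b‖ ^ 2 ≤ fderiv ℝ f a (a - b) - fderiv ℝ f b (a - b) := by
  set h : E → ℝ := fun y => f y - μ / 2 * ‖y‖ ^ 2 with hh
  have hconv : ConvexOn ℝ Set.univ h := strongConvexOn_iff_convex.mp hsc
  have hD : ∀ y : E, HasFDerivAt h
      (fderiv ℝ f y - (μ / 2) • (2 • (innerSL ℝ y).comp (ContinuousLinearMap.id ℝ E))) y := by
    intro y
    exact (hf y).hasFDerivAt.sub (((hasFDerivAt_id y).norm_sq).const_mul (μ / 2))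
  set ψ : ℝ → ℝ := fun t => h (b + t • (a - b)) with hψ
  have hψconv : ConvexOn ℝ Set.univ ψ := by
    have := hconv.comp_affineMap (AffineMap.lineMap b a)
    have hfun : ψ = h ∘ AffineMap.lineMap b a := by
      funext t
      show h (b + t • (a - b)) = h (AffineMap.lineMap b a t)
      rw [AffineMap.lineMap_apply_module', add_comm]
    rw [hfun]; rwa [Set.preimage_univ] at this
  have hψd : ∀ t : ℝ, HasDerivAt ψ
      ((fderiv ℝ f (b + t • (a - b)) - (μ / 2) • (2 • (innerSL ℝ (b + t • (a - b))).comp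
        (ContinuousLinearMap.id ℝ E))) (a - b)) t := by
    intro t
    have hc : HasDerivAt (fun t : ℝ => b + t • (a - b)) (a - b) t := by
      simpa using ((hasDerivAt_id t).smul_const (a - b)).const_add b
    exact (hD (b + t • (a - b))).comp_hasDerivAt t hc
  have e0 : HasDerivAt ψ ((fderiv ℝ f b - (μ / 2) • (2 • (innerSL ℝ b).comp
      (ContinuousLinearMap.id ℝ E))) (a - b)) 0 := by simpa using hψd 0
  have e1 : HasDerivAt ψ ((fderiv ℝ f a - (μ / 2) • (2 • (innerSL ℝ a).comp
      (ContinuousLinearMap.id ℝ E))) (a - b)) 1 := by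
    have := hψd 1
    rw [one_smul, add_sub_cancel] at this
    exact this
  have h0 := hψconv.le_slope_of_hasDerivAt (mem_univ (0:ℝ)) (mem_univ (1:ℝ)) one_pos e0
  have h1 := hψconv.slope_le_of_hasDerivAt (mem_univ (0:ℝ)) (mem_univ (1:ℝ)) one_pos e1
  have key := h0.trans h1
  simp only [ContinuousLinearMap.sub_apply, ContinuousLinearMap.smul_apply,
    ContinuousLinearMap.coe_smul', Pi.smul_apply, ContinuousLinearMap.coe_comp',
    Function.comp_apply, ContinuousLinearMap.coe_id', id_eq, innerSL_apply_apply,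
    smul_eq_mul, nsmul_eq_mul] at key
  push_cast at key
  have hinner : (inner ℝ (a - b) (a - b) : ℝ) = ‖a - b‖ ^ 2 := real_inner_self_eq_norm_sq _
  have hsub : (inner ℝ a (a-b) : ℝ) - inner ℝ b (a-b) = ‖a - b‖ ^ 2 := by
    rw [← inner_sub_left, hinner]
  have h2 : μ / 2 * (2 * inner ℝ a (a - b)) - μ / 2 * (2 * inner ℝ b (a - b)) = μ * ‖a - b‖ ^ 2 := by
    rw [← hsub]; ring
  linarith [key, h2]

set_option maxHeartbeats 1000000 in
/-- Lipschitzness of the inner minimizer: if `y ↦ g x y` is `μ`-strongly convex for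
every `x` and the full gradient of `g` (on the Euclidean product space) is
`ℓ`-Lipschitz, then the minimizer map `x ↦ y*(x)` is `(ℓ/μ)`-Lipschitz. -/
theorem inner_minimizer_lipschitz {d1 d2 : ℕ}
    (g : EuclideanSpace ℝ (Fin d1) → EuclideanSpace ℝ (Fin d2) → ℝ)
    (ystar : EuclideanSpace ℝ (Fin d1) → EuclideanSpace ℝ (Fin d2))
    (μ : ℝ) (ℓ : NNReal) (hμ : 0 < μ)
    (hdiff : Differentiable ℝ
      (fun p : WithLp 2 (EuclideanSpace ℝ (Fin d1) × EuclideanSpace ℝ (Fin d2)) =>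
        g (WithLp.equiv 2 _ p).1 (WithLp.equiv 2 _ p).2))
    (hsc : ∀ x, StrongConvexOn Set.univ μ (fun y => g x y))
    (hlip : LipschitzWith ℓ (gradient
      (fun p : WithLp 2 (EuclideanSpace ℝ (Fin d1) × EuclideanSpace ℝ (Fin d2)) =>
        g (WithLp.equiv 2 _ p).1 (WithLp.equiv 2 _ p).2)))
    (hmin : ∀ x y, g x (ystar x) ≤ g x y) :
    ∀ x₁ x₂, ‖ystar x₁ - ystar x₂‖ ≤ ((ℓ : ℝ) / μ) * ‖x₁ - x₂‖ := by
  classical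
  set F : WithLp 2 (EuclideanSpace ℝ (Fin d1) × EuclideanSpace ℝ (Fin d2)) → ℝ :=
    fun p => g (WithLp.equiv 2 _ p).1 (WithLp.equiv 2 _ p).2 with hF
  set e : (EuclideanSpace ℝ (Fin d1) × EuclideanSpace ℝ (Fin d2)) ≃L[ℝ]
      WithLp 2 (EuclideanSpace ℝ (Fin d1) × EuclideanSpace ℝ (Fin d2)) :=
    (WithLp.prodContinuousLinearEquiv 2 ℝ _ _).symm with he
  set J : EuclideanSpace ℝ (Fin d2) →L[ℝ]
      WithLp 2 (EuclideanSpace ℝ (Fin d1) × EuclideanSpace ℝ (Fin d2)) :=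
    e.toContinuousLinearMap.comp (ContinuousLinearMap.inr ℝ _ _) with hJ
  have hgx : ∀ x y, HasFDerivAt (fun y => g x y) ((fderiv ℝ F (e (x, y))).comp J) y := by
    intro x y
    have h1 : HasFDerivAt (fun y => e (x, y)) J y :=
      (e.toContinuousLinearMap.hasFDerivAt).comp y (hasFDerivAt_prodMk_right x y)
    exact ((hdiff (e (x, y))).hasFDerivAt).comp y h1
  have hrep : ∀ p v, fderiv ℝ F p v = inner ℝ (gradient F p) v :=
    fun p v => (InnerProductSpace.toDual_symm_apply).symm
  -- first-order conditions
  have fo : ∀ x, fderiv ℝ (fun y => g x y) (ystar x) = 0 := by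
    intro x
    exact IsLocalMin.fderiv_eq_zero (Filter.Eventually.of_forall (hmin x))
  intro x₁ x₂
  set y₁ := ystar x₁
  set y₂ := ystar x₂
  set w := y₁ - y₂ with hw
  set p₁ := e (x₁, y₂) with hp₁
  set p₂ := e (x₂, y₂) with hp₂
  have key : μ * ‖w‖ ^ 2 ≤ fderiv ℝ (fun y => g x₁ y) y₁ w - fderiv ℝ (fun y => g x₁ y) y₂ w :=
    strong_mono (fun y => (hgx x₁ y).differentiableAt) (hsc x₁) y₁ y₂
  rw [fo x₁] at key
  have e₁ : fderiv ℝ (fun y => g x₁ y) y₂ w = fderiv ℝ F p₁ (J w) := by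
    rw [(hgx x₁ y₂).fderiv]; rfl
  have e₂ : fderiv ℝ F p₂ (J w) = 0 := by
    have := (hgx x₂ y₂).fderiv
    have h0 := fo x₂
    rw [h0] at this
    have : ((0 : _ →L[ℝ] ℝ)) = (fderiv ℝ F p₂).comp J := this
    rw [← ContinuousLinearMap.comp_apply, ← this]
    rfl
  have key2 : μ * ‖w‖ ^ 2 ≤ fderiv ℝ F p₂ (J w) - fderiv ℝ F p₁ (J w) := by
    rw [e₂]; simpa [e₁] using key
  rw [hrep, hrep, ← inner_sub_left] at key2
  have hcs : (inner ℝ (gradient F p₂ - gradient F p₁) (J w) : ℝ) ≤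
      ‖gradient F p₂ - gradient F p₁‖ * ‖J w‖ := real_inner_le_norm _ _
  have hJw : ‖J w‖ = ‖w‖ := by
    have h2 : ‖J w‖ ^ 2 = ‖w‖ ^ 2 := by
      have h3 := WithLp.prod_norm_sq_eq_of_L2 (J w)
      rw [show (J w).fst = 0 from rfl, show (J w).snd = w from rfl] at h3
      simpa using h3
    nlinarith [norm_nonneg (J w), norm_nonneg w]
  have hdist : ‖gradient F p₂ - gradient F p₁‖ ≤ (ℓ : ℝ) * ‖x₁ - x₂‖ := by
    have := hlip.dist_le_mul p₂ p₁
    rw [dist_eq_norm, dist_eq_norm] at this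
    have hpp : ‖p₂ - p₁‖ = ‖x₁ - x₂‖ := by
      have hsub : p₂ - p₁ = e (x₂ - x₁, 0) := by
        rw [hp₁, hp₂, ← map_sub]
        congr 1
        simp [Prod.ext_iff]
      rw [hsub]
      have h2 : ‖e (x₂ - x₁, (0 : EuclideanSpace ℝ (Fin d2)))‖ ^ 2 = ‖x₂ - x₁‖ ^ 2 := by
        have h3 := WithLp.prod_norm_sq_eq_of_L2 (e (x₂ - x₁, (0 : EuclideanSpace ℝ (Fin d2))))
        rw [show (e (x₂ - x₁, (0 : EuclideanSpace ℝ (Fin d2)))).fst = x₂ - x₁ from rfl,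
          show (e (x₂ - x₁, (0 : EuclideanSpace ℝ (Fin d2)))).snd = (0 : EuclideanSpace ℝ (Fin d2)) from rfl] at h3
        simpa using h3
      have : ‖e (x₂ - x₁, (0 : EuclideanSpace ℝ (Fin d2)))‖ = ‖x₂ - x₁‖ := by
        nlinarith [norm_nonneg (e (x₂ - x₁, (0 : EuclideanSpace ℝ (Fin d2)))), norm_nonneg (x₂ - x₁)]
      rw [this, norm_sub_rev]
    rw [hpp] at this
    exact this
  have final : μ * ‖w‖ ^ 2 ≤ (ℓ : ℝ) * ‖x₁ - x₂‖ * ‖w‖ := by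
    calc μ * ‖w‖ ^ 2 ≤ ‖gradient F p₂ - gradient F p₁‖ * ‖J w‖ := key2.trans hcs
    _ ≤ (ℓ : ℝ) * ‖x₁ - x₂‖ * ‖w‖ := by
        rw [hJw]
        exact mul_le_mul_of_nonneg_right hdist (norm_nonneg w)
  rcases eq_or_lt_of_le (norm_nonneg w) with h | h
  · rw [← h]
    positivity
  · have h1 : μ * ‖w‖ ≤ (ℓ : ℝ) * ‖x₁ - x₂‖ := by
      have h2 : (μ * ‖w‖) * ‖w‖ ≤ ((ℓ : ℝ) * ‖x₁ - x₂‖) * ‖w‖ := by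
        calc (μ * ‖w‖) * ‖w‖ = μ * ‖w‖ ^ 2 := by ring
        _ ≤ _ := final
      exact le_of_mul_le_mul_right h2 h
    calc ‖w‖ = (μ * ‖w‖) / μ := (mul_div_cancel_left₀ ‖w‖ hμ.ne').symm
    _ ≤ ((ℓ : ℝ) * ‖x₁ - x₂‖) / μ := by exact (div_le_div_iff_of_pos_right hμ).mpr h1
    _ = ((ℓ : ℝ) / μ) * ‖x₁ - x₂‖ := by ring
end

section
/- Let f : ℝ^{d1} × ℝ^{d2} → ℝ be differentiable, with y ↦ f(x,y) μ-strongly concave for every x, and ∇f ℓ-Lipschitz, μ > 0. Define y*(x) = argmax_y f(x,y) and φ(x) = f(x, y*(x)). Then φ is differentiable with ∇φ(x) = ∇_x f(x, y*(x)). -/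
open InnerProductSpace

local notation "⟪" x ", " y "⟫" => @inner ℝ _ _ x y

section helpers

variable {E F : Type*} [NormedAddCommGroup E] [InnerProductSpace ℝ E]
  [NormedAddCommGroup F] [InnerProductSpace ℝ F]

/-- Pack a pair into `WithLp 2 (E × F)`. -/
noncomputable def mkL2 (v : E) (w : F) : WithLp 2 (E × F) := (WithLp.equiv 2 _).symm (v, w)

omit [InnerProductSpace ℝ E] [InnerProductSpace ℝ F] in
lemma mkL2_sub (v v' : E) (w w' : F) : mkL2 v w - mkL2 v' w' = mkL2 (v - v') (w - w') := rfl

omit [InnerProductSpace ℝ E] [InnerProductSpace ℝ F] in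
lemma mkL2_add (v v' : E) (w w' : F) : mkL2 v w + mkL2 v' w' = mkL2 (v + v') (w + w') := rfl

omit [InnerProductSpace ℝ E] [InnerProductSpace ℝ F] in
lemma norm_mkL2_fst (v : E) : ‖(mkL2 v (0 : F))‖ = ‖v‖ := WithLp.norm_toLp_fst 2 E F v

omit [InnerProductSpace ℝ E] [InnerProductSpace ℝ F] in
lemma norm_mkL2_snd (w : F) : ‖(mkL2 (0 : E) w)‖ = ‖w‖ := WithLp.norm_toLp_snd 2 E F w

omit [InnerProductSpace ℝ E] [InnerProductSpace ℝ F] in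
lemma norm_mkL2_le (v : E) (w : F) : ‖mkL2 v w‖ ≤ ‖v‖ + ‖w‖ := by
  have h : mkL2 v w = mkL2 v 0 + mkL2 (0 : E) w := by
    rw [mkL2_add, add_zero, zero_add]
  rw [h]
  exact (norm_add_le _ _).trans (by rw [norm_mkL2_fst, norm_mkL2_snd])

lemma normL2_fst_le (q : WithLp 2 (E × F)) : ‖(WithLp.equiv 2 (E × F) q).1‖ ≤ ‖q‖ := by
  rw [norm_eq_sqrt_real_inner q, norm_eq_sqrt_real_inner (WithLp.equiv 2 (E × F) q).1]
  apply Real.sqrt_le_sqrt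
  rw [WithLp.prod_inner_apply]
  have h2 := real_inner_self_nonneg (x := (WithLp.equiv 2 (E × F) q).2)
  simp only [WithLp.equiv_apply] at *
  linarith

/-- Quadratic growth around the maximizer of a strongly concave function. -/
lemma growth_aux {E' : Type*} [NormedAddCommGroup E'] [NormedSpace ℝ E']
    {g : E' → ℝ} {μ : ℝ} (hsc : StrongConcaveOn Set.univ μ g)
    {y₀ : E'} (hmax : ∀ y, g y ≤ g y₀) (y : E') :
    g y ≤ g y₀ - μ / 4 * ‖y₀ - y‖ ^ 2 := by
  have h := hsc.2 (Set.mem_univ y₀) (Set.mem_univ y)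
    (by norm_num : (0:ℝ) ≤ 1/2) (by norm_num : (0:ℝ) ≤ 1/2) (by norm_num : (1/2:ℝ) + 1/2 = 1)
  have h2 := hmax ((1/2 : ℝ) • y₀ + (1/2 : ℝ) • y)
  simp only [smul_eq_mul] at h
  nlinarith [h, h2]

/-- Descent-type lemma: a function with `ℓ`-Lipschitz gradient satisfies a quadratic bound. -/
lemma descent_aux {E' : Type*} [NormedAddCommGroup E'] [InnerProductSpace ℝ E'] [CompleteSpace E']
    {G : E' → ℝ} {ℓ : NNReal} (hd : Differentiable ℝ G)
    (hl : LipschitzWith ℓ (gradient G)) (p q : E') :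
    |G q - G p - ⟪gradient G p, q - p⟫| ≤ ℓ * (‖q - p‖ * ‖q - p‖) := by
  have hfd : ∀ z : E', fderiv ℝ G z = InnerProductSpace.toDual ℝ E' (gradient G z) :=
    fun z => ((InnerProductSpace.toDual ℝ E').apply_symm_apply (fderiv ℝ G z)).symm
  have bound : ∀ z ∈ segment ℝ p q, ‖fderiv ℝ G z - fderiv ℝ G p‖ ≤ (ℓ : ℝ) * ‖q - p‖ := by
    rintro z ⟨a, b, ha, hb, hab, rfl⟩
    have ha' : a = 1 - b := by linarith
    have hz1 : a • p + b • q - p = b • (q - p) := by subst ha'; module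
    calc ‖fderiv ℝ G (a • p + b • q) - fderiv ℝ G p‖
        = ‖gradient G (a • p + b • q) - gradient G p‖ := by
          rw [hfd, hfd, ← map_sub, LinearIsometryEquiv.norm_map]
      _ ≤ (ℓ : ℝ) * ‖a • p + b • q - p‖ := by
          simpa [dist_eq_norm] using hl.dist_le_mul (a • p + b • q) p
      _ ≤ (ℓ : ℝ) * ‖q - p‖ := by
          rw [hz1, norm_smul, Real.norm_eq_abs, abs_of_nonneg hb]
          have : b * ‖q - p‖ ≤ 1 * ‖q - p‖ :=
            mul_le_mul_of_nonneg_right (by linarith) (norm_nonneg _)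
          nlinarith [norm_nonneg (q - p), NNReal.coe_nonneg ℓ]
  have key := (convex_segment p q).norm_image_sub_le_of_norm_fderiv_le'
    (fun z _ => hd z) bound (left_mem_segment ℝ p q) (right_mem_segment ℝ p q)
  rw [hfd, InnerProductSpace.toDual_apply_apply] at key
  rw [← Real.norm_eq_abs]
  calc ‖G q - G p - ⟪gradient G p, q - p⟫‖ ≤ (ℓ : ℝ) * ‖q - p‖ * ‖q - p‖ := key
    _ = ℓ * (‖q - p‖ * ‖q - p‖) := by ring

variable [CompleteSpace E] [CompleteSpace F]

/-- Gradient of the slice `v ↦ g v y₀` is the first component of the full gradient. -/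
lemma hasGradientAt_slice (g : E → F → ℝ)
    (hd : Differentiable ℝ (fun p : WithLp 2 (E × F) =>
      g (WithLp.equiv 2 _ p).1 (WithLp.equiv 2 _ p).2)) (x₀ : E) (y₀ : F) :
    HasGradientAt (fun v => g v y₀)
      ((WithLp.equiv 2 (E × F) (gradient (fun p : WithLp 2 (E × F) =>
        g (WithLp.equiv 2 _ p).1 (WithLp.equiv 2 _ p).2) (mkL2 x₀ y₀))).1) x₀ := by
  set G : WithLp 2 (E × F) → ℝ := fun p =>
    g (WithLp.equiv 2 _ p).1 (WithLp.equiv 2 _ p).2 with hG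
  set p₀ : WithLp 2 (E × F) := mkL2 x₀ y₀ with hp₀
  have hFd : HasFDerivAt G (InnerProductSpace.toDual ℝ (WithLp 2 (E × F)) (gradient G p₀)) p₀ :=
    hasGradientAt_iff_hasFDerivAt.1 (hd p₀).hasGradientAt
  let ι : E →L[ℝ] WithLp 2 (E × F) :=
    ((WithLp.prodContinuousLinearEquiv 2 ℝ E F).symm : (E × F) →L[ℝ] WithLp 2 (E × F)).comp
      (ContinuousLinearMap.inl ℝ E F)
  have hι : ∀ v : E, ι v = mkL2 v 0 := fun v => rfl
  have hjv : ∀ v : E, ι v + mkL2 0 y₀ = mkL2 v y₀ := by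
    intro v
    rw [hι, mkL2_add, add_zero, zero_add]
  have hj : HasFDerivAt (fun v : E => ι v + mkL2 0 y₀) ι x₀ := ι.hasFDerivAt.add_const _
  have hcomp : HasFDerivAt (fun v : E => G (mkL2 v y₀))
      ((InnerProductSpace.toDual ℝ (WithLp 2 (E × F)) (gradient G p₀)).comp ι) x₀ := by
    have h1 : HasFDerivAt G (InnerProductSpace.toDual ℝ (WithLp 2 (E × F)) (gradient G p₀))
        ((fun v : E => ι v + mkL2 0 y₀) x₀) := by
      beta_reduce
      rw [hjv x₀]; exact hFd
    have := h1.comp x₀ hj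
    have hfun : (G ∘ fun v : E => ι v + mkL2 0 y₀) = fun v : E => G (mkL2 v y₀) := by
      funext v; simp only [Function.comp_apply, hjv]
    rwa [hfun] at this
  have hEq : (InnerProductSpace.toDual ℝ (WithLp 2 (E × F)) (gradient G p₀)).comp ι
      = InnerProductSpace.toDual ℝ E ((WithLp.equiv 2 (E × F) (gradient G p₀)).1) := by
    apply ContinuousLinearMap.ext
    intro v
    simp only [ContinuousLinearMap.comp_apply, InnerProductSpace.toDual_apply_apply, hι]
    rw [show (mkL2 v 0 : WithLp 2 (E × F)) = (WithLp.equiv 2 (E × F)).symm (v, 0) from rfl]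
    rw [WithLp.prod_inner_apply]
    simp [WithLp.equiv_apply]
  rw [hasGradientAt_iff_hasFDerivAt]
  have : (fun v : E => G (mkL2 v y₀)) = fun v : E => g v y₀ := rfl
  rw [← this, ← hEq]
  exact hcomp

/-- Descent lemma for a two-variable function, sliced in the first variable. -/
lemma descent_pair (g : E → F → ℝ) {ℓ : NNReal}
    (hd : Differentiable ℝ (fun p : WithLp 2 (E × F) =>
      g (WithLp.equiv 2 _ p).1 (WithLp.equiv 2 _ p).2))
    (hl : LipschitzWith ℓ (gradient (fun p : WithLp 2 (E × F) =>
      g (WithLp.equiv 2 _ p).1 (WithLp.equiv 2 _ p).2)))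
    (u v : E) (w : F) :
    |g u w - g v w - ⟪(WithLp.equiv 2 (E × F) (gradient (fun p : WithLp 2 (E × F) =>
        g (WithLp.equiv 2 _ p).1 (WithLp.equiv 2 _ p).2) (mkL2 v w))).1, u - v⟫|
      ≤ ℓ * (‖u - v‖ * ‖u - v‖) := by
  set G : WithLp 2 (E × F) → ℝ := fun p =>
    g (WithLp.equiv 2 _ p).1 (WithLp.equiv 2 _ p).2 with hG
  have key := descent_aux hd hl (mkL2 v w) (mkL2 u w)
  have h1 : mkL2 u w - mkL2 v w = mkL2 (u - v) (0 : F) := by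
    rw [mkL2_sub, sub_self]
  rw [h1, norm_mkL2_fst] at key
  have h2 : ⟪gradient G (mkL2 v w), mkL2 (u - v) (0 : F)⟫
      = ⟪(WithLp.equiv 2 (E × F) (gradient G (mkL2 v w))).1, u - v⟫ := by
    rw [show (mkL2 (u-v) 0 : WithLp 2 (E × F)) = (WithLp.equiv 2 (E × F)).symm (u - v, 0) from rfl]
    rw [WithLp.prod_inner_apply]
    simp [WithLp.equiv_apply]
  rw [h2] at key
  have h3 : G (mkL2 u w) = g u w := rfl
  have h4 : G (mkL2 v w) = g v w := rfl
  rwa [h3, h4] at key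

end helpers

set_option maxHeartbeats 1600000

/-- Danskin-type theorem for strongly-concave maximization: if `y ↦ f x y` is
`μ`-strongly concave for every `x`, `f` is differentiable with `ℓ`-Lipschitz
gradient, and `y*(x)` maximizes `f x ·`, then `φ(x) = f(x, y*(x))` is
differentiable with `∇φ(x) = ∇_x f(x, y*(x))`. -/
theorem danskin_strongly_concave {d1 d2 : ℕ}
    (f : EuclideanSpace ℝ (Fin d1) → EuclideanSpace ℝ (Fin d2) → ℝ)
    (ystar : EuclideanSpace ℝ (Fin d1) → EuclideanSpace ℝ (Fin d2))
    (μ : ℝ) (ℓ : NNReal) (hμ : 0 < μ)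
    (hdiff : Differentiable ℝ
      (fun p : WithLp 2 (EuclideanSpace ℝ (Fin d1) × EuclideanSpace ℝ (Fin d2)) =>
        f (WithLp.equiv 2 _ p).1 (WithLp.equiv 2 _ p).2))
    (hlip : LipschitzWith ℓ (gradient
      (fun p : WithLp 2 (EuclideanSpace ℝ (Fin d1) × EuclideanSpace ℝ (Fin d2)) =>
        f (WithLp.equiv 2 _ p).1 (WithLp.equiv 2 _ p).2)))
    (hsc : ∀ x, StrongConcaveOn Set.univ μ (fun y => f x y))
    (hmax : ∀ x y, f x y ≤ f x (ystar x)) :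
    ∀ x, HasGradientAt (fun x' => f x' (ystar x'))
      (gradient (fun x' => f x' (ystar x)) x) x := by
  intro x
  set G : WithLp 2 (EuclideanSpace ℝ (Fin d1) × EuclideanSpace ℝ (Fin d2)) → ℝ :=
    fun p => f (WithLp.equiv 2 _ p).1 (WithLp.equiv 2 _ p).2 with hG
  set K : ℝ := 1 + 8 * ℓ / μ with hKdef
  have hK0 : (0:ℝ) ≤ K := by positivity
  -- gradients of pairs: Lipschitz control on first components
  have hgradfst : ∀ (v v' : EuclideanSpace ℝ (Fin d1)) (w w' : EuclideanSpace ℝ (Fin d2)),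
      ‖(WithLp.equiv 2 _ (gradient G (mkL2 v w))).1
        - (WithLp.equiv 2 _ (gradient G (mkL2 v' w'))).1‖ ≤ ℓ * (‖v - v'‖ + ‖w - w'‖) := by
    intro v v' w w'
    have h1 : (WithLp.equiv 2 _ (gradient G (mkL2 v w))).1
        - (WithLp.equiv 2 _ (gradient G (mkL2 v' w'))).1
        = (WithLp.equiv 2 _ (gradient G (mkL2 v w) - gradient G (mkL2 v' w'))).1 := rfl
    rw [h1]
    calc ‖(WithLp.equiv 2 _ (gradient G (mkL2 v w) - gradient G (mkL2 v' w'))).1‖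
        ≤ ‖gradient G (mkL2 v w) - gradient G (mkL2 v' w')‖ := normL2_fst_le _
      _ ≤ ℓ * ‖mkL2 v w - mkL2 v' w'‖ := by
          simpa [dist_eq_norm] using hlip.dist_le_mul (mkL2 v w) (mkL2 v' w')
      _ ≤ ℓ * (‖v - v'‖ + ‖w - w'‖) := by
          rw [mkL2_sub]
          exact mul_le_mul_of_nonneg_left (norm_mkL2_le _ _) (NNReal.coe_nonneg ℓ)
  -- Lipschitz-type bound on the maximizer
  have hK : ∀ x' : EuclideanSpace ℝ (Fin d1), ‖ystar x - ystar x'‖ ≤ K * ‖x - x'‖ := by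
    intro x'
    have hr0 : (0:ℝ) ≤ ‖ystar x - ystar x'‖ := norm_nonneg _
    have hs0 : (0:ℝ) ≤ ‖x - x'‖ := norm_nonneg _
    have qa : f x (ystar x') ≤ f x (ystar x) - μ/4 * ‖ystar x - ystar x'‖^2 :=
      growth_aux (hsc x) (hmax x) (ystar x')
    have qb : f x' (ystar x) ≤ f x' (ystar x') - μ/4 * ‖ystar x - ystar x'‖^2 := by
      have := growth_aux (hsc x') (hmax x') (ystar x)
      rwa [norm_sub_rev] at this
    have d1' := descent_pair f hdiff hlip x x' (ystar x)
    have d2' := descent_pair f hdiff hlip x' x (ystar x')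
    rw [norm_sub_rev x' x] at d2'
    set A1 := (WithLp.equiv 2 _ (gradient G (mkL2 x' (ystar x)))).1 with hA1
    set A2 := (WithLp.equiv 2 _ (gradient G (mkL2 x (ystar x')))).1 with hA2
    have hinner : ⟪A1, x - x'⟫ + ⟪A2, x' - x⟫
        ≤ ℓ * (‖x - x'‖ + ‖ystar x - ystar x'‖) * ‖x - x'‖ := by
      have e1 : ⟪A1, x - x'⟫ + ⟪A2, x' - x⟫ = ⟪A1 - A2, x - x'⟫ := by
        rw [inner_sub_left, show x' - x = -(x - x') from by abel, inner_neg_right]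
        ring
      rw [e1]
      have e2 : ‖A1 - A2‖ ≤ ℓ * (‖x - x'‖ + ‖ystar x - ystar x'‖) := by
        have h := hgradfst x' x (ystar x) (ystar x')
        rw [norm_sub_rev x' x] at h
        rw [hA1, hA2]
        exact h
      calc ⟪A1 - A2, x - x'⟫ ≤ ‖A1 - A2‖ * ‖x - x'‖ := real_inner_le_norm _ _
        _ ≤ ℓ * (‖x - x'‖ + ‖ystar x - ystar x'‖) * ‖x - x'‖ :=
            mul_le_mul_of_nonneg_right e2 hs0
    rw [abs_le] at d1' d2'
    have hmain : μ/2 * ‖ystar x - ystar x'‖^2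
        ≤ ℓ * (‖x - x'‖ + ‖ystar x - ystar x'‖) * ‖x - x'‖ + 2 * ℓ * (‖x - x'‖ * ‖x - x'‖) := by
      linarith [d1'.1, d1'.2, d2'.1, d2'.2, qa, qb, hinner]
    by_cases hc : ‖ystar x - ystar x'‖ ≤ ‖x - x'‖
    · have h0 : 0 ≤ 8 * (ℓ:ℝ) / μ * ‖x - x'‖ := by positivity
      rw [hKdef]; nlinarith
    · push_neg at hc
      have hrpos : 0 < ‖ystar x - ystar x'‖ := lt_of_le_of_lt hs0 hc
      have h8 : μ * ‖ystar x - ystar x'‖ ≤ 8 * ℓ * ‖x - x'‖ := by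
        nlinarith [hmain, hrpos,
          mul_nonneg (mul_nonneg (NNReal.coe_nonneg ℓ) hs0) (sub_nonneg.2 hc.le)]
      rw [hKdef, ← mul_le_mul_iff_right₀ hμ]
      have e3 : μ * ((1 + 8 * ℓ / μ) * ‖x - x'‖) = μ * ‖x - x'‖ + 8 * ℓ * ‖x - x'‖ := by
        field_simp
      rw [e3]
      nlinarith [mul_nonneg hμ.le hs0]
  -- identify the claimed gradient
  have hg1 : gradient (fun x' => f x' (ystar x)) x
      = (WithLp.equiv 2 _ (gradient G (mkL2 x (ystar x)))).1 :=
    (hasGradientAt_slice f hdiff x (ystar x)).gradient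
  rw [hg1]
  set A0 := (WithLp.equiv 2 _ (gradient G (mkL2 x (ystar x)))).1 with hA0
  set C : ℝ := (ℓ : ℝ) * K + ℓ with hC
  have hC0 : 0 ≤ C := by positivity
  -- the central quadratic bound
  have key : ∀ x', |f x' (ystar x') - f x (ystar x) - ⟪A0, x' - x⟫|
      ≤ C * (‖x' - x‖ * ‖x' - x‖) := by
    intro x'
    have ht0 : (0:ℝ) ≤ ‖x' - x‖ := norm_nonneg _
    have d1' := descent_pair f hdiff hlip x' x (ystar x)
    have d2' := descent_pair f hdiff hlip x' x (ystar x')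
    rw [← hA0] at d1'
    set B := (WithLp.equiv 2 _ (gradient G (mkL2 x (ystar x')))).1 with hB
    have hA : ‖B - A0‖ ≤ ℓ * (K * ‖x' - x‖) := by
      have h := hgradfst x x (ystar x') (ystar x)
      rw [sub_self, norm_zero, zero_add, ← hA0, ← hB] at h
      calc ‖B - A0‖ ≤ ℓ * ‖ystar x' - ystar x‖ := h
        _ ≤ ℓ * (K * ‖x' - x‖) := by
            have h2 : ‖ystar x' - ystar x‖ ≤ K * ‖x' - x‖ := by
              have h3 := hK x'
              rwa [norm_sub_rev x x', norm_sub_rev (ystar x) (ystar x')] at h3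
            exact mul_le_mul_of_nonneg_left h2 (NNReal.coe_nonneg ℓ)
    have hinner2 : |⟪B - A0, x' - x⟫| ≤ ℓ * (K * ‖x' - x‖) * ‖x' - x‖ :=
      (abs_real_inner_le_norm _ _).trans (by
        exact mul_le_mul_of_nonneg_right hA ht0)
    have esub : ⟪B, x' - x⟫ - ⟪A0, x' - x⟫ = ⟪B - A0, x' - x⟫ :=
      (inner_sub_left _ _ _).symm
    have lb : f x' (ystar x) ≤ f x' (ystar x') := hmax x' (ystar x)
    have ub : f x (ystar x') ≤ f x (ystar x) := hmax x (ystar x')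
    rw [hC]
    rw [abs_le] at d1' d2' hinner2 ⊢
    constructor
    · nlinarith [d1'.1, d2'.1, hinner2.1, lb, ub, esub]
    · nlinarith [d1'.2, d2'.2, hinner2.2, lb, ub, esub]
  -- conclude via the little-o characterization
  rw [hasGradientAt_iff_hasFDerivAt, hasFDerivAt_iff_isLittleO_nhds_zero,
    Asymptotics.isLittleO_iff]
  intro c hc
  rw [Metric.eventually_nhds_iff]
  refine ⟨c / (C + 1), by positivity, fun h hh => ?_⟩
  have hb := key (x + h)
  rw [add_sub_cancel_left] at hb
  have ht : ‖h‖ ≤ c / (C + 1) := by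
    rw [dist_zero_right] at hh
    exact hh.le
  simp only [InnerProductSpace.toDual_apply_apply, Real.norm_eq_abs, norm_norm]
  calc |f (x + h) (ystar (x + h)) - f x (ystar x) - ⟪A0, h⟫| ≤ C * (‖h‖ * ‖h‖) := hb
    _ ≤ c * ‖h‖ := by
        have hC1 : (0:ℝ) < C + 1 := by linarith
        have h2 : C * (c / (C + 1)) ≤ c := by
          rw [mul_comm, div_mul_eq_mul_div, div_le_iff₀ hC1]
          nlinarith
        nlinarith [norm_nonneg h, mul_le_mul_of_nonneg_left ht hC0]
end

section
/- Let f : ℝ^{d1} × ℝ^{d2} → ℝ have ∇f ℓ-Lipschitz and y ↦ f(x,y) μ-strongly concave for every x (μ > 0, κ := ℓ/μ). Then φ(x) = max_y f(x,y) has (ℓ(1 + κ))-Lipschitz gradient: ‖∇φ(x₁) − ∇φ(x₂)‖ ≤ ℓ(1 + ℓ/μ)‖x₁ − x₂‖ for all x₁, x₂. -/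
set_option linter.unusedSectionVars false

open InnerProductSpace

variable {E F : Type*} [NormedAddCommGroup E] [InnerProductSpace ℝ E] [CompleteSpace E]
  [NormedAddCommGroup F] [InnerProductSpace ℝ F] [CompleteSpace F]

noncomputable def mk2 (x : E) (y : F) : WithLp 2 (E × F) := (WithLp.equiv 2 (E × F)).symm (x, y)

lemma mk2_fst (x : E) (y : F) : (mk2 x y).fst = x := rfl
lemma mk2_snd (x : E) (y : F) : (mk2 x y).snd = y := rfl
lemma mk2_sub (x x' : E) (y y' : F) : mk2 x y - mk2 x' y' = mk2 (x - x') (y - y') := rfl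

lemma norm_mk2_le (x : E) (y : F) : ‖mk2 x y‖ ≤ ‖x‖ + ‖y‖ := by
  have h := WithLp.prod_norm_eq_of_L2 (mk2 x y)
  rw [h, mk2_fst, mk2_snd]
  have h2 : ‖x‖ ^ 2 + ‖y‖ ^ 2 ≤ (‖x‖ + ‖y‖) ^ 2 := by nlinarith [norm_nonneg x, norm_nonneg y]
  calc Real.sqrt (‖x‖ ^ 2 + ‖y‖ ^ 2) ≤ Real.sqrt ((‖x‖ + ‖y‖) ^ 2) := Real.sqrt_le_sqrt h2
    _ = ‖x‖ + ‖y‖ := Real.sqrt_sq (by positivity)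

lemma pnorm_fst_le (p : WithLp 2 (E × F)) : ‖p.fst‖ ≤ ‖p‖ := by
  have h := WithLp.prod_norm_sq_eq_of_L2 p
  nlinarith [norm_nonneg p, norm_nonneg p.fst, norm_nonneg p.snd, sq_nonneg ‖p.snd‖]

lemma pnorm_snd_le (p : WithLp 2 (E × F)) : ‖p.snd‖ ≤ ‖p‖ := by
  have h := WithLp.prod_norm_sq_eq_of_L2 p
  nlinarith [norm_nonneg p, norm_nonneg p.fst, norm_nonneg p.snd, sq_nonneg ‖p.fst‖]

lemma norm_mk2_left (x : E) : ‖mk2 x (0 : F)‖ = ‖x‖ := by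
  rw [WithLp.prod_norm_eq_of_L2, mk2_fst, mk2_snd]
  simp [Real.sqrt_sq]

/-- Gradient of the first slice. -/
lemma hasGradientAt_slice_fst (g : WithLp 2 (E × F) → ℝ) (x : E) (y : F)
    (hg : DifferentiableAt ℝ g (mk2 x y)) :
    HasGradientAt (fun x' => g (mk2 x' y)) (gradient g (mk2 x y)).fst x := by
  have hG : HasFDerivAt g (toDual ℝ _ (gradient g (mk2 x y))) (mk2 x y) :=
    hasGradientAt_iff_hasFDerivAt.1 hg.hasGradientAt
  have hincl : HasFDerivAt (fun x' : E => mk2 x' y)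
      (((WithLp.prodContinuousLinearEquiv 2 ℝ E F).symm : (E × F) →L[ℝ] WithLp 2 (E × F)).comp
        (ContinuousLinearMap.inl ℝ E F)) x := by
    have : (fun x' : E => mk2 x' y) = fun x' : E =>
        ((WithLp.prodContinuousLinearEquiv 2 ℝ E F).symm : (E × F) →L[ℝ] WithLp 2 (E × F))
          (ContinuousLinearMap.inl ℝ E F x') + mk2 0 y := by
      funext x'
      apply (WithLp.equiv 2 (E × F)).injective
      simp [mk2, WithLp.prodContinuousLinearEquiv_symm_apply, Prod.ext_iff]
    rw [this]
    exact (((((WithLp.prodContinuousLinearEquiv 2 ℝ E F).symm :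
      (E × F) →L[ℝ] WithLp 2 (E × F)).comp
        (ContinuousLinearMap.inl ℝ E F)).hasFDerivAt (x := x)).add_const _)
  have hcomp := hG.comp x hincl
  rw [hasGradientAt_iff_hasFDerivAt]
  refine hcomp.congr_fderiv ?_
  ext u
  symm
  show ⟪(gradient g (mk2 x y)).fst, u⟫_ℝ = ⟪gradient g (mk2 x y), mk2 u 0⟫_ℝ
  rw [WithLp.prod_inner_apply]
  show _ = ⟪(gradient g (mk2 x y)).fst, u⟫_ℝ + ⟪(gradient g (mk2 x y)).snd, (0 : F)⟫_ℝ
  rw [inner_zero_right, add_zero]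

/-- Gradient of the second slice. -/
lemma hasGradientAt_slice_snd (g : WithLp 2 (E × F) → ℝ) (x : E) (y : F)
    (hg : DifferentiableAt ℝ g (mk2 x y)) :
    HasGradientAt (fun y' => g (mk2 x y')) (gradient g (mk2 x y)).snd y := by
  have hG : HasFDerivAt g (toDual ℝ _ (gradient g (mk2 x y))) (mk2 x y) :=
    hasGradientAt_iff_hasFDerivAt.1 hg.hasGradientAt
  have hincl : HasFDerivAt (fun y' : F => mk2 x y')
      (((WithLp.prodContinuousLinearEquiv 2 ℝ E F).symm : (E × F) →L[ℝ] WithLp 2 (E × F)).comp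
        (ContinuousLinearMap.inr ℝ E F)) y := by
    have : (fun y' : F => mk2 x y') = fun y' : F =>
        ((WithLp.prodContinuousLinearEquiv 2 ℝ E F).symm : (E × F) →L[ℝ] WithLp 2 (E × F))
          (ContinuousLinearMap.inr ℝ E F y') + mk2 x 0 := by
      funext y'
      apply (WithLp.equiv 2 (E × F)).injective
      simp [mk2, WithLp.prodContinuousLinearEquiv_symm_apply, Prod.ext_iff]
    rw [this]
    exact (((((WithLp.prodContinuousLinearEquiv 2 ℝ E F).symm :
      (E × F) →L[ℝ] WithLp 2 (E × F)).comp
        (ContinuousLinearMap.inr ℝ E F)).hasFDerivAt (x := y)).add_const _)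
  have hcomp := hG.comp y hincl
  rw [hasGradientAt_iff_hasFDerivAt]
  refine hcomp.congr_fderiv ?_
  ext u
  symm
  show ⟪(gradient g (mk2 x y)).snd, u⟫_ℝ = ⟪gradient g (mk2 x y), mk2 0 u⟫_ℝ
  rw [WithLp.prod_inner_apply]
  show _ = ⟪(gradient g (mk2 x y)).fst, (0 : E)⟫_ℝ + ⟪(gradient g (mk2 x y)).snd, u⟫_ℝ
  rw [inner_zero_right, zero_add]

/-- Mean value type bound using the gradient. -/
lemma grad_mvt (g : E → ℝ) (G : E → E) (hg : ∀ u, HasGradientAt g (G u) u)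
    {C : ℝ} (x x' : E) (hC : ∀ u ∈ segment ℝ x x', ‖G u - G x‖ ≤ C) :
    |g x' - g x - ⟪G x, x' - x⟫_ℝ| ≤ C * ‖x' - x‖ := by
  set φ : E → ℝ := fun u => g u - toDual ℝ E (G x) u with hφ
  have hd : ∀ u ∈ segment ℝ x x', HasFDerivWithinAt φ
      (toDual ℝ E (G u) - toDual ℝ E (G x)) (segment ℝ x x') u := by
    intro u _
    exact ((hasGradientAt_iff_hasFDerivAt.1 (hg u)).sub
      ((toDual ℝ E (G x)).hasFDerivAt)).hasFDerivWithinAt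
  have hb : ∀ u ∈ segment ℝ x x', ‖toDual ℝ E (G u) - toDual ℝ E (G x)‖ ≤ C := by
    intro u hu
    rw [← map_sub, (toDual ℝ E).norm_map]
    exact hC u hu
  have key := (convex_segment x x').norm_image_sub_le_of_norm_hasFDerivWithin_le hd hb
    (left_mem_segment ℝ x x') (right_mem_segment ℝ x x')
  have : φ x' - φ x = g x' - g x - ⟪G x, x' - x⟫_ℝ := by
    simp only [hφ, toDual_apply_apply, inner_sub_right]
    ring
  rw [← this, ← Real.norm_eq_abs]
  exact key

/-- For a strongly concave function, the maximizer gives a quadratic gap. -/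
lemma strong_concave_gap (h : F → ℝ) {μ : ℝ} (hμ : 0 ≤ μ)
    (hc : StrongConcaveOn Set.univ μ h) (y0 : F) (hm : ∀ y, h y ≤ h y0) (y : F) :
    h y ≤ h y0 - μ / 2 * ‖y - y0‖ ^ 2 := by
  set c : ℝ := μ / 2 * ‖y - y0‖ ^ 2 with hcdef
  have hc0 : 0 ≤ c := by positivity
  have key : ∀ t : ℝ, 0 < t → t ≤ 1 → h y ≤ h y0 - (1 - t) * c := by
    intro t ht ht1
    have h1 := hc.2 (Set.mem_univ y) (Set.mem_univ y0) ht.le (by linarith : (0:ℝ) ≤ 1 - t)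
      (by ring)
    have h2 : h (t • y + (1 - t) • y0) ≤ h y0 := hm _
    simp only [smul_eq_mul] at h1
    nlinarith [h1, h2, mul_pos ht (lt_of_lt_of_le ht (le_refl t))]
  have : ∀ ε : ℝ, 0 < ε → h y ≤ (h y0 - c) + ε := by
    intro ε hε
    have hc1 : (0:ℝ) < c + 1 := by linarith
    set t : ℝ := min 1 (ε / (c + 1)) with htdef
    have ht0 : 0 < t := lt_min one_pos (by positivity)
    have ht1 : t ≤ 1 := min_le_left _ _
    have htc : t * c ≤ ε := by
      have h3 : t ≤ ε / (c + 1) := min_le_right _ _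
      have h4 : t * c ≤ (ε / (c + 1)) * c := by nlinarith
      have h5 : (ε / (c + 1)) * c ≤ ε := by
        rw [div_mul_eq_mul_div, div_le_iff₀ hc1]
        nlinarith
      linarith
    have := key t ht0 ht1
    nlinarith
  linarith [le_of_forall_pos_le_add this]

/-- Lipschitz bound from everywhere gradient bound. -/
lemma grad_lip_bound (g : F → ℝ) (G : F → F) (hg : ∀ u, HasGradientAt g (G u) u)
    {C : ℝ} (hC : ∀ u, ‖G u‖ ≤ C) (a b : F) : |g b - g a| ≤ C * ‖b - a‖ := by
  have hd : ∀ u ∈ (Set.univ : Set F), HasFDerivWithinAt g (toDual ℝ F (G u)) Set.univ u :=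
    fun u _ => (hasGradientAt_iff_hasFDerivAt.1 (hg u)).hasFDerivWithinAt
  have hb : ∀ u ∈ (Set.univ : Set F), ‖toDual ℝ F (G u)‖ ≤ C := by
    intro u _; rw [(toDual ℝ F).norm_map]; exact hC u
  have := convex_univ.norm_image_sub_le_of_norm_hasFDerivWithin_le hd hb
    (Set.mem_univ a) (Set.mem_univ b)
  rwa [Real.norm_eq_abs] at this

lemma mem_segment_norm_sub_le {x x' u : E} (hu : u ∈ segment ℝ x x') :
    ‖u - x‖ ≤ ‖x' - x‖ := by
  obtain ⟨a, b, ha, hb, hab, rfl⟩ := hu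
  have : a • x + b • x' - x = b • (x' - x) := by
    rw [smul_sub]; rw [show a = 1 - b by linarith]; module
  rw [this, norm_smul, Real.norm_eq_abs, abs_of_nonneg hb]
  nlinarith [norm_nonneg (x' - x)]

lemma pprod_sub_fst (p q : WithLp 2 (E × F)) : (p - q).fst = p.fst - q.fst := rfl
lemma pprod_sub_snd (p q : WithLp 2 (E × F)) : (p - q).snd = p.snd - q.snd := rfl

lemma norm_mk2_right (y : F) : ‖mk2 (0 : E) y‖ = ‖y‖ := by
  rw [WithLp.prod_norm_eq_of_L2, mk2_fst, mk2_snd]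
  simp [Real.sqrt_sq]


set_option maxHeartbeats 2000000 in
/-- Smoothness of the max-function: if `f` has `ℓ`-Lipschitz gradient and
`y ↦ f x y` is `μ`-strongly concave for every `x` (`κ = ℓ/μ`), then
`φ(x) = max_y f(x,y) = f(x, y*(x))` has `ℓ(1 + κ)`-Lipschitz gradient. -/
theorem max_function_gradient_lipschitz {d1 d2 : ℕ}
    (f : EuclideanSpace ℝ (Fin d1) → EuclideanSpace ℝ (Fin d2) → ℝ)
    (ystar : EuclideanSpace ℝ (Fin d1) → EuclideanSpace ℝ (Fin d2))
    (μ : ℝ) (ℓ : NNReal) (hμ : 0 < μ)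
    (hdiff : Differentiable ℝ
      (fun p : WithLp 2 (EuclideanSpace ℝ (Fin d1) × EuclideanSpace ℝ (Fin d2)) =>
        f (WithLp.equiv 2 _ p).1 (WithLp.equiv 2 _ p).2))
    (hlip : LipschitzWith ℓ (gradient
      (fun p : WithLp 2 (EuclideanSpace ℝ (Fin d1) × EuclideanSpace ℝ (Fin d2)) =>
        f (WithLp.equiv 2 _ p).1 (WithLp.equiv 2 _ p).2)))
    (hsc : ∀ x, StrongConcaveOn Set.univ μ (fun y => f x y))
    (hmax : ∀ x y, f x y ≤ f x (ystar x)) :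
    ∀ x₁ x₂, ‖gradient (fun x => f x (ystar x)) x₁ - gradient (fun x => f x (ystar x)) x₂‖ ≤
      (ℓ : ℝ) * (1 + (ℓ : ℝ) / μ) * ‖x₁ - x₂‖ := by
  have E₁def : True := trivial
  set F' : WithLp 2 (EuclideanSpace ℝ (Fin d1) × EuclideanSpace ℝ (Fin d2)) → ℝ :=
    fun p => f p.fst p.snd with hF'
  have hdiff' : Differentiable ℝ F' := hdiff
  have hlip' : LipschitzWith ℓ (gradient F') := hlip
  set G : WithLp 2 (EuclideanSpace ℝ (Fin d1) × EuclideanSpace ℝ (Fin d2)) → WithLp 2 (EuclideanSpace ℝ (Fin d1) × EuclideanSpace ℝ (Fin d2)) := gradient F' with hGdef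
  set L : ℝ := (ℓ : ℝ) with hLdef
  have hL0 : (0:ℝ) ≤ L := ℓ.2
  set κ : ℝ := L / μ with hκdef
  have hκ0 : 0 ≤ κ := by positivity
  have hGlip : ∀ p q, ‖G p - G q‖ ≤ L * ‖p - q‖ := by
    intro p q
    have := hlip'.dist_le_mul p q
    rwa [dist_eq_norm, dist_eq_norm] at this
  have hgx : ∀ (x : EuclideanSpace ℝ (Fin d1)) (y : EuclideanSpace ℝ (Fin d2)), HasGradientAt (fun x' => f x' y) ((G (mk2 x y)).fst) x :=
    fun x y => hasGradientAt_slice_fst F' x y (hdiff' _)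
  have hgy : ∀ (x : EuclideanSpace ℝ (Fin d1)) (y : EuclideanSpace ℝ (Fin d2)), HasGradientAt (fun y' => f x y') ((G (mk2 x y)).snd) y :=
    fun x y => hasGradientAt_slice_snd F' x y (hdiff' _)
  have hGx_lip : ∀ p q, ‖(G p).fst - (G q).fst‖ ≤ L * ‖p - q‖ := by
    intro p q
    have h1 := pnorm_fst_le (G p - G q)
    rw [pprod_sub_fst] at h1
    exact h1.trans (hGlip p q)
  have hGy_lip : ∀ p q, ‖(G p).snd - (G q).snd‖ ≤ L * ‖p - q‖ := by
    intro p q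
    have h1 := pnorm_snd_le (G p - G q)
    rw [pprod_sub_snd] at h1
    exact h1.trans (hGlip p q)
  have hmkx : ∀ (a a' : EuclideanSpace ℝ (Fin d1)) (b : EuclideanSpace ℝ (Fin d2)), ‖mk2 a b - mk2 a' b‖ = ‖a - a'‖ := by
    intro a a' b; rw [mk2_sub, sub_self, norm_mk2_left]
  have hmky : ∀ (a : EuclideanSpace ℝ (Fin d1)) (b b' : EuclideanSpace ℝ (Fin d2)), ‖mk2 a b - mk2 a b'‖ = ‖b - b'‖ := by
    intro a b b'; rw [mk2_sub, sub_self, norm_mk2_right]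
  -- ystar is (L/μ)-Lipschitz
  have hylip : ∀ a b, ‖ystar a - ystar b‖ ≤ κ * ‖a - b‖ := by
    intro a b
    set y₁ := ystar a with hy₁
    set y₂ := ystar b with hy₂
    set D : ℝ := ‖y₁ - y₂‖ with hD
    have hD0 : 0 ≤ D := norm_nonneg _
    rcases eq_or_lt_of_le hD0 with h0 | hpos
    · rw [← h0]; positivity
    have gap1 : f a y₂ ≤ f a y₁ - μ/2 * ‖y₂ - y₁‖^2 :=
      strong_concave_gap (fun y => f a y) hμ.le (hsc a) y₁ (hmax a) y₂
    have gap2 : f b y₁ ≤ f b y₂ - μ/2 * D^2 :=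
      strong_concave_gap (fun y => f b y) hμ.le (hsc b) y₂ (hmax b) y₁
    have hrev : ‖y₂ - y₁‖ = D := norm_sub_rev _ _
    rw [hrev] at gap1
    have hg : ∀ u : EuclideanSpace ℝ (Fin d2), HasGradientAt (fun y => f a y - f b y)
        ((G (mk2 a u)).snd - (G (mk2 b u)).snd) u := by
      intro u
      rw [hasGradientAt_iff_hasFDerivAt, map_sub]
      exact ((hgy a u).hasFDerivAt).sub ((hgy b u).hasFDerivAt)
    have hC : ∀ u : EuclideanSpace ℝ (Fin d2), ‖(G (mk2 a u)).snd - (G (mk2 b u)).snd‖ ≤ L * ‖a - b‖ := by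
      intro u
      have h1 := hGy_lip (mk2 a u) (mk2 b u)
      rwa [hmkx] at h1
    have hψ := grad_lip_bound (fun y => f a y - f b y)
      (fun u => (G (mk2 a u)).snd - (G (mk2 b u)).snd) hg hC y₂ y₁
    have habs := (abs_le.mp hψ).2
    have key : μ * D^2 ≤ (L * ‖a - b‖) * D := by nlinarith
    have hμD : μ * D ≤ L * ‖a - b‖ := by nlinarith
    rw [hκdef, div_mul_eq_mul_div, le_div_iff₀ hμ]
    nlinarith
  -- envelope theorem
  have henv : ∀ x, HasGradientAt (fun x' => f x' (ystar x')) ((G (mk2 x (ystar x))).fst) x := by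
    intro x
    set y := ystar x with hy
    set g₀ := (G (mk2 x y)).fst with hg₀
    have sqeq : ∀ u : EuclideanSpace ℝ (Fin d1), ‖u‖ * ‖u‖ = ‖u‖^2 := fun u => (sq ‖u‖).symm
    have bound : ∀ x', |f x' (ystar x') - f x y - ⟪g₀, x' - x⟫_ℝ|
        ≤ (2*L + L*κ) * ‖x' - x‖^2 := by
      intro x'
      set y' := ystar x' with hy'
      have low : |f x' y - f x y - ⟪(G (mk2 x y)).fst, x' - x⟫_ℝ|
          ≤ (L * ‖x' - x‖) * ‖x' - x‖ := by
        apply grad_mvt (fun u => f u y) (fun u => (G (mk2 u y)).fst) (fun u => hgx u y) x x'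
        intro u hu
        have h1 := hGx_lip (mk2 u y) (mk2 x y)
        rw [hmkx] at h1
        exact h1.trans (mul_le_mul_of_nonneg_left (mem_segment_norm_sub_le hu) hL0)
      have up : |f x' y' - f x y' - ⟪(G (mk2 x y')).fst, x' - x⟫_ℝ|
          ≤ (L * ‖x' - x‖) * ‖x' - x‖ := by
        apply grad_mvt (fun u => f u y') (fun u => (G (mk2 u y')).fst) (fun u => hgx u y') x x'
        intro u hu
        have h1 := hGx_lip (mk2 u y') (mk2 x y')
        rw [hmkx] at h1
        exact h1.trans (mul_le_mul_of_nonneg_left (mem_segment_norm_sub_le hu) hL0)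
      have hinner : |⟪(G (mk2 x y')).fst - g₀, x' - x⟫_ℝ| ≤ (L*κ) * ‖x' - x‖^2 := by
        have h2 : ‖(G (mk2 x y')).fst - g₀‖ ≤ L * ‖y' - y‖ := by
          have := hGx_lip (mk2 x y') (mk2 x y)
          rwa [hmky] at this
        have h3 : ‖y' - y‖ ≤ κ * ‖x' - x‖ := hylip x' x
        calc |⟪(G (mk2 x y')).fst - g₀, x' - x⟫_ℝ|
            ≤ ‖(G (mk2 x y')).fst - g₀‖ * ‖x' - x‖ := abs_real_inner_le_norm _ _
          _ ≤ (L * ‖y' - y‖) * ‖x' - x‖ :=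
            mul_le_mul_of_nonneg_right h2 (norm_nonneg _)
          _ ≤ (L * (κ * ‖x' - x‖)) * ‖x' - x‖ :=
            mul_le_mul_of_nonneg_right
              (mul_le_mul_of_nonneg_left h3 hL0) (norm_nonneg _)
          _ = (L*κ) * ‖x' - x‖^2 := by ring
      have s1 : f x' y ≤ f x' (ystar x') := hmax x' y
      have s2 : f x y' ≤ f x y := hmax x y'
      have hsplit : ⟪(G (mk2 x y')).fst, x' - x⟫_ℝ - ⟪g₀, x' - x⟫_ℝ
          = ⟪(G (mk2 x y')).fst - g₀, x' - x⟫_ℝ := (inner_sub_left _ _ _).symm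
      have hsq := sqeq (x' - x)
      rw [abs_le] at low up hinner ⊢
      constructor
      · nlinarith [low.1, s1]
      · nlinarith [up.2, s2, hinner.2, hsplit]
    rw [hasGradientAt_iff_hasFDerivAt]
    apply HasFDerivAt.of_isLittleO
    rw [Asymptotics.isLittleO_iff]
    intro ε hε
    rw [Metric.eventually_nhds_iff]
    refine ⟨ε / (2*L + L*κ + 1), by positivity, fun x' hx' => ?_⟩
    rw [dist_eq_norm] at hx'
    have hb := bound x'
    have hn0 : 0 ≤ ‖x' - x‖ := norm_nonneg _
    have hC0 : (0:ℝ) ≤ 2*L + L*κ := by positivity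
    calc ‖f x' (ystar x') - f x y - (toDual ℝ (EuclideanSpace ℝ (Fin d1)) g₀) (x' - x)‖
        = |f x' (ystar x') - f x y - ⟪g₀, x' - x⟫_ℝ| := by rw [Real.norm_eq_abs, toDual_apply_apply]
      _ ≤ (2*L + L*κ) * ‖x' - x‖^2 := hb
      _ ≤ ε * ‖x' - x‖ := by
          have hx2 : (2*L + L*κ + 1) * ‖x' - x‖ < ε := by
            have h5 := (lt_div_iff₀ (show (0:ℝ) < 2*L + L*κ + 1 by positivity)).mp hx'
            linarith [h5]
          have key2 : (ε - (2*L + L*κ + 1) * ‖x' - x‖) * ‖x' - x‖ ≥ 0 :=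
            mul_nonneg (by linarith) hn0
          nlinarith [key2, sq_nonneg ‖x' - x‖]
  -- conclusion
  intro x₁ x₂
  have e₁ : gradient (fun x => f x (ystar x)) x₁ = (G (mk2 x₁ (ystar x₁))).fst :=
    (henv x₁).gradient
  have e₂ : gradient (fun x => f x (ystar x)) x₂ = (G (mk2 x₂ (ystar x₂))).fst :=
    (henv x₂).gradient
  rw [e₁, e₂]
  have h1 := hGx_lip (mk2 x₁ (ystar x₁)) (mk2 x₂ (ystar x₂))
  have h2 : ‖mk2 x₁ (ystar x₁) - mk2 x₂ (ystar x₂)‖ ≤ ‖x₁ - x₂‖ + ‖ystar x₁ - ystar x₂‖ := by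
    rw [mk2_sub]; exact norm_mk2_le _ _
  have h3 := hylip x₁ x₂
  have hn0 : 0 ≤ ‖x₁ - x₂‖ := norm_nonneg _
  calc ‖(G (mk2 x₁ (ystar x₁))).fst - (G (mk2 x₂ (ystar x₂))).fst‖
      ≤ L * ‖mk2 x₁ (ystar x₁) - mk2 x₂ (ystar x₂)‖ := h1
    _ ≤ L * (‖x₁ - x₂‖ + κ * ‖x₁ - x₂‖) := by nlinarith
    _ = L * (1 + κ) * ‖x₁ - x₂‖ := by ring
end
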